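/- Let X be extensible with d nodes. There exists a unique sequence of integers (a_i)_{i≥1} such that for every n ≥ d with det(C(X_n)) ≠ 0 and every 1 ≤ i ≤ n, one has (−Δ)·ω_i^{(n)} ≡ a_i·ω_n^{(n)} modulo the root lattice Q(X_n). Moreover a_i = det(C(X_{i−1})) for i > d. -/

import Mathlib

open scoped BigOperators

def Xmat (d : ℕ) (C : Matrix (Fin d) (Fin d) ℤ) (n : ℕ) : Matrix (Fin n) (Fin n) ℤ :=
  Matrix.of fun i j =>
    if h : (i : ℕ) < d ∧ (j : ℕ) < d then C ⟨i, h.1⟩ ⟨j, h.2⟩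
    else if (i : ℕ) = (j : ℕ) then 2
    else if (i : ℕ) + 1 = (j : ℕ) ∨ (j : ℕ) + 1 = (i : ℕ) then -1
    else 0

def detX (d : ℕ) (C : Matrix (Fin d) (Fin d) ℤ) (n : ℕ) : ℤ := (Xmat d C n).det

def Δdiff (d : ℕ) (C : Matrix (Fin d) (Fin d) ℤ) : ℤ := detX d C d - detX d C (d - 1)

def Extensible (d : ℕ) (C : Matrix (Fin d) (Fin d) ℤ) : Prop :=
  Δdiff d C ≠ 0 ∧ detX d C d ≠ 0 ∧ IsCoprime (Δdiff d C) (detX d C d)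

def fw (n : ℕ) (i : Fin n) : Fin n → ℤ := Pi.single i 1

def col (d : ℕ) (C : Matrix (Fin d) (Fin d) ℤ) (n : ℕ) (j : Fin n) : Fin n → ℤ :=
  fun i => Xmat d C n i j

def Qlat (d : ℕ) (C : Matrix (Fin d) (Fin d) ℤ) (n : ℕ) : Submodule ℤ (Fin n → ℤ) :=
  Submodule.span ℤ (Set.range (col d C n))

def lastFin (n : ℕ) (h : 0 < n) : Fin n := ⟨n - 1, by omega⟩

def ASeq (d : ℕ) (C : Matrix (Fin d) (Fin d) ℤ) (a : ℕ → ℤ) : Prop :=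
  ∀ n, d ≤ n → detX d C n ≠ 0 → ∀ i : Fin n,
    (-(Δdiff d C)) • fw n i - a (i : ℕ) • fw n (lastFin n i.pos) ∈ Qlat d C n


namespace TSaux
open Finset
open scoped Matrix
variable {d : ℕ} (C : Matrix (Fin d) (Fin d) ℤ)

lemma xmat_val {n n' : ℕ} {i j : Fin n} {i' j' : Fin n'} (h1 : (i:ℕ) = (i':ℕ))
    (h2 : (j:ℕ) = (j':ℕ)) : Xmat d C n i j = Xmat d C n' i' j' := by
  simp only [Xmat, Matrix.of_apply, h1, h2]

lemma xmat_eq_C : Xmat d C d = C := by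
  ext i j
  simp [Xmat, Fin.is_lt]

lemma adjX (m : ℕ) : (Xmat d C (m+1)).adjugate (Fin.last m) (Fin.last m) = detX d C m := by
  rw [Matrix.adjugate_apply, Matrix.det_succ_row _ (Fin.last m)]
  rw [Finset.sum_eq_single_of_mem (Fin.last m) (Finset.mem_univ _)]
  · simp only [Matrix.updateRow_self, Pi.single_eq_same, Fin.succAbove_last]
    rw [show ((-1:ℤ))^((Fin.last m : ℕ) + (Fin.last m : ℕ)) = 1 by
      simpa using Even.neg_one_pow (n := (Fin.last m : ℕ) + (Fin.last m : ℕ)) ⟨m, by simp⟩]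
    rw [one_mul, one_mul]
    congr 1
    ext p q
    rw [Matrix.submatrix_apply, Matrix.updateRow_ne (by
      exact fun h => absurd (congrArg Fin.val h) (by simp [Fin.castSucc]; omega))]
    exact xmat_val C (by simp) (by simp)
  · intro b _ hb
    simp [Matrix.updateRow_self, Pi.single_apply, hb]

lemma xmat_apply_row_ge {n : ℕ} {i j : Fin n} (h : d ≤ (i:ℕ)) :
    Xmat d C n i j = if (i : ℕ) = (j : ℕ) then 2
      else if (i : ℕ) + 1 = (j : ℕ) ∨ (j : ℕ) + 1 = (i : ℕ) then -1 else 0 := by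
  rw [Xmat, Matrix.of_apply, dif_neg (by omega)]

lemma xmat_apply_col_ge {n : ℕ} {i j : Fin n} (h : d ≤ (j:ℕ)) :
    Xmat d C n i j = if (i : ℕ) = (j : ℕ) then 2
      else if (i : ℕ) + 1 = (j : ℕ) ∨ (j : ℕ) + 1 = (i : ℕ) then -1 else 0 := by
  rw [Xmat, Matrix.of_apply, dif_neg (by omega)]

lemma detX_rec (m : ℕ) (h : d ≤ m+1) :
    detX d C (m+2) = 2 * detX d C (m+1) - detX d C m := by
  have hlast : ∀ j : Fin (m+2), (j:ℕ) ≠ m → (j:ℕ) ≠ m+1 →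
      Xmat d C (m+2) (Fin.last (m+1)) j = 0 := by
    intro j h1 h2
    have hj := j.isLt
    rw [xmat_apply_row_ge C (by simp; omega)]
    simp only [Fin.val_last]
    rw [if_neg (by omega), if_neg (by omega)]
  set j2 : Fin (m+2) := ⟨m, by omega⟩ with hj2
  have hsa : ∀ (k : Fin (m+1)), ((j2.succAbove k : Fin (m+2)) : ℕ)
      = if (k:ℕ) < m then (k:ℕ) else (k:ℕ)+1 := by
    intro k
    unfold Fin.succAbove
    split
    · rename_i hlt
      rw [if_pos (by simpa [Fin.lt_def] using hlt)]
      simp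
    · rename_i hlt
      rw [if_neg (by simpa [Fin.lt_def] using hlt)]
      simp
  have hS2 : (Matrix.det ((Xmat d C (m+2)).submatrix (Fin.last (m+1)).succAbove j2.succAbove))
      = - detX d C m := by
    rw [Fin.succAbove_last, Matrix.det_succ_column _ (Fin.last m)]
    rw [Finset.sum_eq_single_of_mem (Fin.last m) (Finset.mem_univ _)]
    · simp only [Matrix.submatrix_apply, Fin.succAbove_last]
      have hcol : ((j2.succAbove (Fin.last m) : Fin (m+2)) : ℕ) = m + 1 := by
        rw [hsa]; simp
      have hd' : d ≤ ((j2.succAbove (Fin.last m) : Fin (m+2)) : ℕ) := by rw [hcol]; omega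
      have hent : Xmat d C (m+2) ((Fin.last m).castSucc) (j2.succAbove (Fin.last m)) = -1 := by
        rw [xmat_apply_col_ge C hd', hcol]
        simp only [Fin.coe_castSucc, Fin.val_last]
        rw [if_neg (by omega), if_pos (by simp)]
      rw [hent]
      have hpow : ((-1:ℤ))^(((Fin.last m) : ℕ) + ((Fin.last m) : ℕ)) = 1 := by
        simpa using Even.neg_one_pow (n := ((Fin.last m) : ℕ) + ((Fin.last m) : ℕ))
          ⟨m, by simp⟩
      rw [hpow, one_mul]
      show _ = - (Xmat d C m).det
      have hsub : ((Xmat d C (m+2)).submatrix Fin.castSucc j2.succAbove).submatrix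
          Fin.castSucc Fin.castSucc = Xmat d C m := by
        ext p q
        simp only [Matrix.submatrix_apply]
        refine xmat_val C (by simp) ?_
        rw [hsa]
        have := q.isLt
        simp only [Fin.coe_castSucc]
        rw [if_pos (by omega)]
      rw [hsub]
      ring
    · intro b _ hb
      have hcol : ((j2.succAbove (Fin.last m) : Fin (m+2)) : ℕ) = m + 1 := by
        rw [hsa]; simp
      have hb' : (b : ℕ) ≠ m := fun hh => hb (Fin.ext (by simpa using hh))
      have hbe : Xmat d C (m+2) (b.castSucc) (j2.succAbove (Fin.last m)) = 0 := by
        rw [xmat_apply_col_ge C (show d ≤ ((j2.succAbove (Fin.last m) : Fin (m+2)) : ℕ) by rw [hcol]; omega)]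
        have := b.isLt
        simp only [hcol, Fin.coe_castSucc]
        rw [if_neg (by omega), if_neg (by omega)]
      simp [Matrix.submatrix_apply, hbe]
  rw [detX, Matrix.det_succ_row _ (Fin.last (m+1))]
  rw [← Finset.add_sum_erase _ _ (Finset.mem_univ j2)]
  rw [Finset.sum_eq_single_of_mem (Fin.last (m+1))
    (Finset.mem_erase.2 ⟨by intro hh; exact absurd (congrArg Fin.val hh) (by simp [hj2]), Finset.mem_univ _⟩)]
  · have hj2v : ((j2 : Fin (m+2)) : ℕ) = m := rfl
    have hent2 : Xmat d C (m+2) (Fin.last (m+1)) j2 = -1 := by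
      rw [xmat_apply_row_ge C (show d ≤ ((Fin.last (m+1) : Fin (m+2)) : ℕ) by
        rw [Fin.val_last]; omega), hj2v]
      simp only [Fin.val_last]
      rw [if_neg (by omega), if_pos (by simp)]
    have hentl : Xmat d C (m+2) (Fin.last (m+1)) (Fin.last (m+1)) = 2 := by
      rw [xmat_apply_row_ge C (show d ≤ ((Fin.last (m+1) : Fin (m+2)) : ℕ) by rw [Fin.val_last]; omega)]
      simp
    rw [hent2, hentl, hS2]
    have hpow2 : ((-1:ℤ))^((Fin.last (m+1) : ℕ) + (j2 : ℕ)) = -1 := by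
      simpa using Odd.neg_one_pow (n := (Fin.last (m+1) : ℕ) + (j2 : ℕ)) ⟨m, by simp [hj2]; omega⟩
    have hpow3 : ((-1:ℤ))^((Fin.last (m+1) : ℕ) + (Fin.last (m+1) : ℕ)) = 1 := by
      simpa using Even.neg_one_pow (n := (Fin.last (m+1) : ℕ) + (Fin.last (m+1) : ℕ)) ⟨m+1, by simp⟩
    have hsubl : (Xmat d C (m+2)).submatrix (Fin.last (m+1)).succAbove (Fin.last (m+1)).succAbove
        = Xmat d C (m+1) := by
      ext p q
      simp only [Matrix.submatrix_apply, Fin.succAbove_last]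
      exact xmat_val C (by simp) (by simp)
    rw [hpow2, hpow3, hsubl]
    have hfold : detX d C (m+1) = (Xmat d C (m+1)).det := rfl
    rw [← hfold]
    ring
  · intro b hb hbl
    have hb2 : (b:ℕ) ≠ m := by
      intro hh
      exact (Finset.mem_erase.1 hb).1 (Fin.ext (by simpa [hj2] using hh))
    have hbl' : (b:ℕ) ≠ m+1 := fun hh => hbl (Fin.ext (by simpa using hh))
    rw [hlast b hb2 hbl']
    ring

lemma mem_Q {n : ℕ} (x : Fin n → ℤ) : (Xmat d C n) *ᵥ x ∈ Qlat d C n := by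
  have : (Xmat d C n) *ᵥ x = ∑ j : Fin n, x j • col d C n j := by
    funext r
    rw [Matrix.mulVec, dotProduct, Finset.sum_apply]
    exact Finset.sum_congr rfl fun j _ => by simp [col, mul_comm]
  rw [this]
  exact Submodule.sum_mem _ fun j _ =>
    Submodule.smul_mem _ _ (Submodule.subset_span ⟨j, rfl⟩)

lemma Q_mem {n : ℕ} {w : Fin n → ℤ} (h : w ∈ Qlat d C n) :
    ∃ x : Fin n → ℤ, (Xmat d C n) *ᵥ x = w := by
  have hQ : Qlat d C n ≤ LinearMap.range (Xmat d C n).mulVecLin := by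
    rw [Qlat, Submodule.span_le]
    rintro _ ⟨j, rfl⟩
    exact ⟨Pi.single j 1, by funext r; simp [Matrix.mulVecLin, Matrix.mulVec_single, col]⟩
  obtain ⟨x, hx⟩ := hQ h
  exact ⟨x, hx⟩

section Esec
variable {e : ℕ} (C : Matrix (Fin (e+1)) (Fin (e+1)) ℤ)

/-- `C` with the bottom-right entry decreased by `1`. -/
def Bm : Matrix (Fin (e+1)) (Fin (e+1)) ℤ :=
  C - Matrix.single (Fin.last e) (Fin.last e) 1

lemma Bm_updateRow (v : Fin (e+1) → ℤ) :
    (Bm C).updateRow (Fin.last e) v = C.updateRow (Fin.last e) v := by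
  ext i j
  by_cases h : i = Fin.last e
  · subst h; simp
  · simp only [Matrix.updateRow_ne h, Bm, Matrix.sub_apply, Matrix.single]
    rw [Matrix.of_apply, if_neg (fun hc => h hc.1.symm)]
    ring

lemma adjBm_last : (Bm C).adjugate (Fin.last e) (Fin.last e)
    = detX (e+1) C e := by
  rw [Matrix.adjugate_apply, Bm_updateRow]
  rw [← Matrix.adjugate_apply]
  have := adjX C e
  rwa [xmat_eq_C] at this

lemma detBm : (Bm C).det = Δdiff (e+1) C := by
  have hC : C = (Bm C).updateRow (Fin.last e)
      ((Bm C) (Fin.last e) + Pi.single (Fin.last e) 1) := by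
    ext i j
    by_cases h : i = Fin.last e
    · subst h
      simp only [Matrix.updateRow_self, Pi.add_apply, Bm, Matrix.sub_apply,
        Matrix.single, Pi.single_apply, Matrix.of_apply]
      by_cases hj : j = Fin.last e
      · subst hj; simp
      · rw [if_neg (fun hc => hj hc.2.symm), if_neg hj]
        ring
    · simp only [Matrix.updateRow_ne h, Bm, Matrix.sub_apply, Matrix.single]
      rw [Matrix.of_apply, if_neg (fun hc => h hc.1.symm)]
      ring
  have h1 : C.det = (Bm C).det + ((Bm C).updateRow (Fin.last e) (Pi.single (Fin.last e) 1)).det := by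
    conv_lhs => rw [hC]
    rw [Matrix.det_updateRow_add, Matrix.updateRow_eq_self]
  have h2 : ((Bm C).updateRow (Fin.last e) (Pi.single (Fin.last e) 1)).det
      = detX (e+1) C e := by
    rw [← Matrix.adjugate_apply]
    exact adjBm_last C
  have h3 : detX (e+1) C (e+1) = C.det := by rw [detX, xmat_eq_C]
  have h4 : (e+1) - 1 = e := rfl
  rw [Δdiff, h4, h3, h1, h2]
  ring

/-- The sequence `a`. -/
def aS : ℕ → ℤ := fun i =>
  if h : i < e+1 then (Bm C).adjugate (Fin.last e) ⟨i, h⟩ else detX (e+1) C i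

lemma aS_ge {i : ℕ} (h : e+1 ≤ i) : aS C i = detX (e+1) C i := dif_neg (by omega)

lemma aS_last : aS C e = detX (e+1) C e := by
  rw [aS, dif_pos (by omega)]
  have : (⟨e, by omega⟩ : Fin (e+1)) = Fin.last e := rfl
  rw [this, adjBm_last]

lemma detX_diff {m : ℕ} (h : e ≤ m) :
    detX (e+1) C (m+1) = detX (e+1) C m + Δdiff (e+1) C := by
  induction m, h using Nat.le_induction with
  | base =>
    have h4 : (e+1) - 1 = e := rfl
    rw [Δdiff, h4]; ring
  | succ m hm ih =>
    have := detX_rec C (m := m) (by omega)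
    rw [this, ih]; ring

lemma aS_step {p : ℕ} (h : e ≤ p) : aS C (p+1) = aS C p + Δdiff (e+1) C := by
  rcases Nat.eq_or_lt_of_le h with rfl | h'
  · rw [aS_last, aS_ge C (by omega)]
    exact detX_diff C le_rfl
  · rw [aS_ge C (by omega), aS_ge C (by omega)]
    exact detX_diff C (by omega)

lemma detX_formula (K : ℕ) :
    detX (e+1) C (e+K) = detX (e+1) C e + K * Δdiff (e+1) C := by
  induction K with
  | zero => simp
  | succ K ih =>
    have : e + (K+1) = (e + K) + 1 := rfl
    rw [this, detX_diff C (by omega), ih]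
    push_cast
    ring

end Esec

/-- Entry function on naturals. -/
def ent (d : ℕ) (C : Matrix (Fin d) (Fin d) ℤ) (p q : ℕ) : ℤ :=
  if h : p < d ∧ q < d then C ⟨p, h.1⟩ ⟨q, h.2⟩
  else if p = q then 2
  else if p + 1 = q ∨ q + 1 = p then -1
  else 0

lemma xmat_ent {n : ℕ} (p q : Fin n) : Xmat d C n p q = ent d C p q := rfl

lemma ent_ge {p q : ℕ} (h : ¬(p < d ∧ q < d)) :
    ent d C p q = if p = q then 2 else if p + 1 = q ∨ q + 1 = p then -1 else 0 :=
  dif_neg h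

section MainExist
variable {e : ℕ} (C : Matrix (Fin (e+1)) (Fin (e+1)) ℤ)

lemma main_exist : ASeq (e+1) C (aS C) := by
  intro n hn _ i
  have hin : (i:ℕ) < n := i.isLt
  have hmlt : min (i:ℕ) e < e+1 := by omega
  set xf : ℕ → ℤ := fun k =>
    if h : k < e+1 then -((Bm C).adjugate ⟨k, h⟩ ⟨min (i:ℕ) e, hmlt⟩)
    else -(aS C (min k (i:ℕ))) with hxfdef
  have hxf_ge : ∀ k, e ≤ k → xf k = -(aS C (min k (i:ℕ))) := by
    intro k hk
    by_cases h : k < e+1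
    · have hke : k = e := by omega
      simp only [hxfdef]
      rw [dif_pos h]
      have h1 : aS C (min k (i:ℕ)) = (Bm C).adjugate (Fin.last e) ⟨min k (i:ℕ), by omega⟩ :=
        dif_pos (by omega)
      have h2 : (⟨k, h⟩ : Fin (e+1)) = Fin.last e := Fin.ext (by simp [hke])
      have h3 : (⟨min (i:ℕ) e, hmlt⟩ : Fin (e+1)) = ⟨min k (i:ℕ), by omega⟩ :=
        Fin.ext (by simp only []; omega)
      rw [h2, h3, h1]
    · simp only [hxfdef]
      rw [dif_neg h]
  have key : Xmat (e+1) C n *ᵥ (fun k : Fin n => xf (k:ℕ))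
      = (-(Δdiff (e+1) C)) • fw n i - aS C (i:ℕ) • fw n (lastFin n i.pos) := by
    funext r
    have hrn : (r:ℕ) < n := r.isLt
    have hRHS : ((-(Δdiff (e+1) C)) • fw n i - aS C (i:ℕ) • fw n (lastFin n i.pos)) r
        = -(Δdiff (e+1) C) * (if (r:ℕ) = (i:ℕ) then 1 else 0)
          - aS C (i:ℕ) * (if (r:ℕ) = n-1 then 1 else 0) := by
      have hfw1 : fw n i r = (if (r:ℕ) = (i:ℕ) then (1:ℤ) else 0) := by
        simp only [fw]
        rw [Pi.single_apply]
        by_cases h : r = i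
        · rw [if_pos h, if_pos (congrArg Fin.val h)]
        · rw [if_neg h, if_neg (fun hh => h (Fin.ext hh))]
      have hfw2 : fw n (lastFin n i.pos) r = (if (r:ℕ) = n-1 then (1:ℤ) else 0) := by
        simp only [fw]
        rw [Pi.single_apply]
        by_cases h : r = lastFin n i.pos
        · rw [if_pos h, if_pos (show (r:ℕ) = n-1 by rw [h]; rfl)]
        · rw [if_neg h, if_neg (show ¬((r:ℕ) = n-1) from fun hh => h (Fin.ext hh))]
      simp only [Pi.sub_apply, Pi.smul_apply, smul_eq_mul, hfw1, hfw2]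
    rw [hRHS]
    have hLHS : (Xmat (e+1) C n *ᵥ (fun k : Fin n => xf (k:ℕ))) r
        = ∑ k ∈ Finset.range n, ent (e+1) C (r:ℕ) k * xf k := by
      rw [Matrix.mulVec, dotProduct,
        ← Fin.sum_univ_eq_sum_range (fun k => ent (e+1) C (r:ℕ) k * xf k) n]
      exact Finset.sum_congr rfl fun j _ => by rw [xmat_ent]
    rw [hLHS]
    rcases lt_or_ge (r:ℕ) (e+1) with hre | hre
    · -- row inside the C block
      have hvan : ∀ k ∈ Finset.range n, k ∉ Finset.range (e+2) →
          ent (e+1) C (r:ℕ) k * xf k = 0 := by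
        intro k _ hk2
        rw [Finset.mem_range] at hk2
        rw [ent_ge _ (by omega), if_neg (by omega), if_neg (by omega), zero_mul]
      have hCsum : ∑ k ∈ Finset.range (e+1), ent (e+1) C (r:ℕ) k * xf k
          = -((C * (Bm C).adjugate) ⟨(r:ℕ), hre⟩ ⟨min (i:ℕ) e, hmlt⟩) := by
        rw [Matrix.mul_apply, ← Finset.sum_neg_distrib,
          ← Fin.sum_univ_eq_sum_range (fun k => ent (e+1) C (r:ℕ) k * xf k) (e+1)]
        refine Finset.sum_congr rfl fun k _ => ?_
        have hk : (k:ℕ) < e+1 := k.isLt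
        rw [show ent (e+1) C (r:ℕ) (k:ℕ) = C ⟨(r:ℕ), hre⟩ ⟨(k:ℕ), hk⟩ from dif_pos ⟨hre, hk⟩]
        simp only [hxfdef]
        rw [dif_pos hk]
        rw [show (⟨(k:ℕ), hk⟩ : Fin (e+1)) = k from Fin.ext rfl]
        ring
      have hmul : (C * (Bm C).adjugate) ⟨(r:ℕ), hre⟩ ⟨min (i:ℕ) e, hmlt⟩
          = Δdiff (e+1) C * (if (r:ℕ) = min (i:ℕ) e then 1 else 0)
            + (if (r:ℕ) = e then aS C (min (i:ℕ) e) else 0) := by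
        have hCB : C = Bm C + Matrix.single (Fin.last e) (Fin.last e) 1 := by
          rw [Bm, sub_add_cancel]
        have hsm : C * (Bm C).adjugate
            = Bm C * (Bm C).adjugate
              + Matrix.single (Fin.last e) (Fin.last e) 1 * (Bm C).adjugate := by
          rw [← Matrix.add_mul, ← hCB]
        rw [hsm, Matrix.mul_adjugate, detBm]
        rw [Matrix.add_apply, Matrix.smul_apply, Matrix.one_apply, smul_eq_mul]
        congr 1
        · by_cases h : ((⟨(r:ℕ), hre⟩ : Fin (e+1)) = ⟨min (i:ℕ) e, hmlt⟩)
          · rw [if_pos h, if_pos (by simpa [Fin.ext_iff] using h)]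
          · rw [if_neg h, if_neg (fun hh => h (Fin.ext hh))]
        · by_cases h : ((⟨(r:ℕ), hre⟩ : Fin (e+1)) = Fin.last e)
          · rw [h, Matrix.single_mul_apply_same, one_mul,
              if_pos (by simpa [Fin.ext_iff] using h)]
            simp only [aS]
            rw [dif_pos hmlt]
          · rw [Matrix.single_mul_apply_of_ne (h := h),
              if_neg (fun hh => h (Fin.ext (by simpa using hh)))]
      by_cases hne : e+1 < n
      · have hsplit : ∑ k ∈ Finset.range n, ent (e+1) C (r:ℕ) k * xf k
            = (∑ k ∈ Finset.range (e+1), ent (e+1) C (r:ℕ) k * xf k)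
              + ent (e+1) C (r:ℕ) (e+1) * xf (e+1) := by
          rw [← Finset.sum_range_succ]
          exact (Finset.sum_subset (by
            intro k hk
            rw [Finset.mem_range] at hk ⊢
            omega) hvan).symm
        rw [hsplit, hCsum, hmul]
        have hent1 : ent (e+1) C (r:ℕ) (e+1) = if (r:ℕ) = e then -1 else 0 := by
          rw [ent_ge _ (by omega), if_neg (by omega)]
          by_cases hh : (r:ℕ) = e
          · rw [if_pos (Or.inl (by omega)), if_pos hh]
          · rw [if_neg (by omega), if_neg hh]
        rw [hent1, hxf_ge (e+1) (by omega)]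
        rcases le_or_gt (i:ℕ) e with hie | hie
        · have h1 : min (i:ℕ) e = (i:ℕ) := by omega
          have h2 : min (e+1) (i:ℕ) = (i:ℕ) := by omega
          rw [h1, h2, if_neg (show (r:ℕ) ≠ n-1 by omega)]
          by_cases h4 : (r:ℕ) = e
          · by_cases h5 : (r:ℕ) = (i:ℕ)
            · rw [if_pos h5, if_pos h4, if_pos h4]; ring
            · rw [if_neg h5, if_pos h4, if_pos h4]; ring
          · by_cases h5 : (r:ℕ) = (i:ℕ)
            · rw [if_pos h5, if_neg h4, if_neg h4]; ring
            · rw [if_neg h5, if_neg h4, if_neg h4]; ring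
        · have h1 : min (i:ℕ) e = e := by omega
          have h2 : min (e+1) (i:ℕ) = e+1 := by omega
          rw [h1, h2, if_neg (show (r:ℕ) ≠ n-1 by omega),
            if_neg (show (r:ℕ) ≠ (i:ℕ) by omega)]
          by_cases h4 : (r:ℕ) = e
          · rw [if_pos h4, if_pos h4, if_pos h4, aS_step C (le_refl e)]
            ring
          · rw [if_neg h4, if_neg h4, if_neg h4]
            ring
          
      · have hne' : n = e+1 := by omega
        have hsplit : ∑ k ∈ Finset.range n, ent (e+1) C (r:ℕ) k * xf k
            = ∑ k ∈ Finset.range (e+1), ent (e+1) C (r:ℕ) k * xf k := by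
          rw [show Finset.range n = Finset.range (e+1) from by rw [hne']]
        rw [hsplit, hCsum, hmul]
        have h1 : min (i:ℕ) e = (i:ℕ) := by omega
        have h2 : n - 1 = e := by omega
        rw [h1, h2]
        by_cases h4 : (r:ℕ) = e
        · by_cases h5 : (r:ℕ) = (i:ℕ)
          · rw [if_pos h5, if_pos h4, if_pos h4]; ring
          · rw [if_neg h5, if_pos h4, if_pos h4]; ring
        · by_cases h5 : (r:ℕ) = (i:ℕ)
          · rw [if_pos h5, if_neg h4, if_neg h4]; ring
          · rw [if_neg h5, if_neg h4, if_neg h4]; ring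
    · -- tail row
      have h1 : 1 ≤ (r:ℕ) := by omega
      have hvan : ∀ k ∈ Finset.range n, k ∉ ({(r:ℕ)-1, (r:ℕ), (r:ℕ)+1} : Finset ℕ) →
          ent (e+1) C (r:ℕ) k * xf k = 0 := by
        intro k _ hknot
        simp only [Finset.mem_insert, Finset.mem_singleton] at hknot
        push_neg at hknot
        rw [ent_ge _ (by omega), if_neg (by omega), if_neg (by omega), zero_mul]
      have he1 : ent (e+1) C (r:ℕ) ((r:ℕ)-1) = -1 := by
        rw [ent_ge _ (by omega), if_neg (by omega), if_pos (Or.inr (by omega))]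
      have he2 : ent (e+1) C (r:ℕ) (r:ℕ) = 2 := by
        rw [ent_ge _ (by omega), if_pos rfl]
      by_cases hlast : (r:ℕ) = n-1
      · have hsub : ({(r:ℕ)-1, (r:ℕ)} : Finset ℕ) ⊆ Finset.range n := by
          intro k hk
          simp only [Finset.mem_insert, Finset.mem_singleton] at hk
          rw [Finset.mem_range]
          omega
        have hsplit : ∑ k ∈ Finset.range n, ent (e+1) C (r:ℕ) k * xf k
            = ∑ k ∈ ({(r:ℕ)-1, (r:ℕ)} : Finset ℕ), ent (e+1) C (r:ℕ) k * xf k := by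
          refine (Finset.sum_subset hsub ?_).symm
          intro k hk hknot
          refine hvan k hk ?_
          simp only [Finset.mem_insert, Finset.mem_singleton] at hknot ⊢
          rw [Finset.mem_range] at hk
          push_neg at hknot ⊢
          exact ⟨hknot.1, hknot.2, by omega⟩
        rw [hsplit, Finset.sum_insert (by simp; omega), Finset.sum_singleton]
        rw [he1, he2, hxf_ge _ (by omega), hxf_ge _ (by omega)]
        rw [if_pos hlast]
        rcases eq_or_lt_of_le (show (i:ℕ) ≤ n-1 by omega) with hie | hie
        · -- i is the last node
          have hm1 : min ((r:ℕ)-1) (i:ℕ) = (r:ℕ)-1 := by omega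
          have hm2 : min (r:ℕ) (i:ℕ) = (i:ℕ) := by omega
          rw [hm1, hm2, if_pos (by omega)]
          have hs1 : aS C (((r:ℕ)-1)+1) = aS C ((r:ℕ)-1) + Δdiff (e+1) C :=
            aS_step C (by omega)
          have hs1' : aS C (i:ℕ) = aS C ((r:ℕ)-1) + Δdiff (e+1) C := by
            rw [← hs1]; congr 1; omega
          rw [hs1']
          ring
        · -- i is strictly before the last node
          have hm1 : min ((r:ℕ)-1) (i:ℕ) = (i:ℕ) := by omega
          have hm2 : min (r:ℕ) (i:ℕ) = (i:ℕ) := by omega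
          rw [hm1, hm2, if_neg (by omega)]
          ring
      · -- interior tail row
        have he3 : ent (e+1) C (r:ℕ) ((r:ℕ)+1) = -1 := by
          rw [ent_ge _ (by omega), if_neg (by omega), if_pos (Or.inl rfl)]
        have hsub : ({(r:ℕ)-1, (r:ℕ), (r:ℕ)+1} : Finset ℕ) ⊆ Finset.range n := by
          intro k hk
          simp only [Finset.mem_insert, Finset.mem_singleton] at hk
          rw [Finset.mem_range]
          omega
        have hsplit : ∑ k ∈ Finset.range n, ent (e+1) C (r:ℕ) k * xf k
            = ∑ k ∈ ({(r:ℕ)-1, (r:ℕ), (r:ℕ)+1} : Finset ℕ), ent (e+1) C (r:ℕ) k * xf k :=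
          (Finset.sum_subset hsub (fun k hk hknot => hvan k hk hknot)).symm
        rw [hsplit,
          Finset.sum_insert (by simp only [Finset.mem_insert, Finset.mem_singleton]; omega),
          Finset.sum_insert (by simp only [Finset.mem_singleton]; omega),
          Finset.sum_singleton]
        rw [he1, he2, he3, hxf_ge _ (by omega), hxf_ge _ (by omega), hxf_ge _ (by omega)]
        rw [if_neg hlast]
        have hs1 : aS C (((r:ℕ)-1)+1) = aS C ((r:ℕ)-1) + Δdiff (e+1) C :=
          aS_step C (by omega)
        have hs1' : aS C (r:ℕ) = aS C ((r:ℕ)-1) + Δdiff (e+1) C := by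
          rw [← hs1]; congr 1; omega
        rcases show ((r:ℕ)+1 ≤ (i:ℕ)) ∨ ((r:ℕ) = (i:ℕ)) ∨ ((i:ℕ) < (r:ℕ)) by omega
          with hc | hc | hc
        · have hm1 : min ((r:ℕ)-1) (i:ℕ) = (r:ℕ)-1 := by omega
          have hm2 : min (r:ℕ) (i:ℕ) = (r:ℕ) := by omega
          have hm3 : min ((r:ℕ)+1) (i:ℕ) = (r:ℕ)+1 := by omega
          have hs2 : aS C ((r:ℕ)+1) = aS C (r:ℕ) + Δdiff (e+1) C := aS_step C (by omega)
          rw [hm1, hm2, hm3, hs2, hs1', if_neg (by omega)]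
          ring
        · have hm1 : min ((r:ℕ)-1) (i:ℕ) = (r:ℕ)-1 := by omega
          have hm2 : min (r:ℕ) (i:ℕ) = (i:ℕ) := by omega
          have hm3 : min ((r:ℕ)+1) (i:ℕ) = (i:ℕ) := by omega
          have hii : aS C (i:ℕ) = aS C ((r:ℕ)-1) + Δdiff (e+1) C := by rw [← hc]; exact hs1'
          rw [hm1, hm2, hm3, hii, if_pos hc]
          ring
        · have hm1 : min ((r:ℕ)-1) (i:ℕ) = (i:ℕ) := by omega
          have hm2 : min (r:ℕ) (i:ℕ) = (i:ℕ) := by omega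
          have hm3 : min ((r:ℕ)+1) (i:ℕ) = (i:ℕ) := by omega
          rw [hm1, hm2, hm3, if_neg (by omega)]
          ring
  have goal := mem_Q C (fun k : Fin n => xf (k:ℕ))
  rw [key] at goal
  exact goal

end MainExist

section Uniq
variable {e : ℕ} (C : Matrix (Fin (e+1)) (Fin (e+1)) ℤ)

lemma cop_detX (hcop : IsCoprime (Δdiff (e+1) C) (detX (e+1) C (e+1))) (K : ℕ) :
    IsCoprime (Δdiff (e+1) C) (detX (e+1) C (e+K)) := by
  obtain ⟨u, v, huv⟩ := hcop
  refine ⟨u - v * ((K:ℤ) - 1), v, ?_⟩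
  have h1 : detX (e+1) C (e+K) = detX (e+1) C e + K * Δdiff (e+1) C := detX_formula C K
  have h2 : detX (e+1) C (e+1) = detX (e+1) C e + Δdiff (e+1) C := detX_diff C le_rfl
  rw [h2] at huv
  rw [h1]
  linear_combination huv

lemma cop_succ (hcop : IsCoprime (Δdiff (e+1) C) (detX (e+1) C (e+1))) (K : ℕ) :
    IsCoprime (detX (e+1) C (e+K+1)) (detX (e+1) C (e+K)) := by
  obtain ⟨u, v, huv⟩ := cop_detX C hcop K
  refine ⟨u, v - u, ?_⟩
  have hd : detX (e+1) C ((e+K)+1) = detX (e+1) C (e+K) + Δdiff (e+1) C :=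
    detX_diff C (by omega)
  linear_combination huv + u * hd

lemma detX_big (hΔ : Δdiff (e+1) C ≠ 0) (K : ℕ) :
    (K:ℤ) - |detX (e+1) C e| ≤ |detX (e+1) C (e+K)| := by
  have h1 : detX (e+1) C (e+K) = detX (e+1) C e + K * Δdiff (e+1) C := detX_formula C K
  have hK : (K:ℤ) ≤ |(K:ℤ) * Δdiff (e+1) C| := by
    rw [abs_mul, abs_of_nonneg (by positivity : (0:ℤ) ≤ (K:ℤ))]
    calc (K:ℤ) = K * 1 := by ring
    _ ≤ K * |Δdiff (e+1) C| := by
        have := Int.one_le_abs (by simpa using hΔ)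
        exact mul_le_mul_of_nonneg_left this (by positivity)
  have htri : |(K:ℤ) * Δdiff (e+1) C|
      ≤ |detX (e+1) C e + K * Δdiff (e+1) C| + |detX (e+1) C e| := by
    have h2 := abs_add_le (detX (e+1) C e + (K:ℤ) * Δdiff (e+1) C) (-(detX (e+1) C e))
    have h3 : detX (e+1) C e + (K:ℤ) * Δdiff (e+1) C + (-(detX (e+1) C e))
        = (K:ℤ) * Δdiff (e+1) C := by ring
    rw [h3, abs_neg] at h2
    exact h2
  rw [h1]
  linarith

end Uniq

end TSaux

open scoped Matrix

/-- There is a unique integer sequence `(a_i)` with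
`(-Δ)·ω_i ≡ a_i·ω_n (mod Q(X_n))` for every `n ≥ d` with `det C(X_n) ≠ 0`
and every node `i`; moreover `a_i = det(C(X_{i-1}))` for nodes beyond the
`X`-part.  (Nodes are indexed `0,…,n-1`, so the 0-based index `i`
corresponds to the paper's node `i+1`; `ASeq` is the congruence property.) -/
theorem tensor_stab_a_sequence (d : ℕ) (hd : 1 ≤ d)
    (C : Matrix (Fin d) (Fin d) ℤ) (hX : Extensible d C) :
    ∃ a : ℕ → ℤ, ASeq d C a ∧
      (∀ i, d ≤ i → a i = detX d C i) ∧
      (∀ a' : ℕ → ℤ, ASeq d C a' → ∀ i, a' i = a i) := by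
  obtain ⟨e, rfl⟩ : ∃ e, d = e + 1 := ⟨d - 1, by omega⟩
  obtain ⟨hΔ, hdet, hcop⟩ := hX
  refine ⟨TSaux.aS C, TSaux.main_exist C, fun i hi => TSaux.aS_ge C hi, ?_⟩
  intro a' ha' i
  by_contra hne
  set k : ℤ := a' i - TSaux.aS C i with hk
  have hk0 : k ≠ 0 := sub_ne_zero.mpr hne
  set K : ℕ := (detX (e+1) C e).natAbs + k.natAbs + i + 2 with hK
  set n : ℕ := e + K + 1 with hn
  have hnd : e + 1 ≤ n := by omega
  have hbig : ((K:ℤ) + 1) - |detX (e+1) C e| ≤ |detX (e+1) C n| := by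
    have h5 := TSaux.detX_big C hΔ (K+1)
    have hidx : e + (K+1) = n := by omega
    rw [hidx] at h5
    have hcast : (((K+1 : ℕ)) : ℤ) = (K:ℤ) + 1 := by exact_mod_cast rfl
    rw [hcast] at h5
    exact h5
  have hKval : (K:ℤ) = |detX (e+1) C e| + |k| + (i:ℤ) + 2 := by
    rw [hK]
    push_cast [Int.natCast_natAbs]
    ring
  have habs : |k| + 1 ≤ |detX (e+1) C n| := by
    have hi0 : (0:ℤ) ≤ (i:ℤ) := Int.ofNat_nonneg i
    linarith
  have hdetn : detX (e+1) C n ≠ 0 := by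
    intro h0
    rw [h0] at habs
    simp only [abs_zero] at habs
    have := abs_nonneg k
    linarith
  have hiF : i < n := by omega
  set iF : Fin n := ⟨i, hiF⟩ with hiF'
  have m1 := TSaux.main_exist C n hnd hdetn iF
  have m2 := ha' n hnd hdetn iF
  have hsub : (TSaux.aS C i - a' i) • fw n (lastFin n iF.pos) ∈ Qlat (e+1) C n := by
    have hmem := Submodule.sub_mem _ m2 m1
    rw [sub_sub_sub_cancel_left, ← sub_smul] at hmem
    exact hmem
  obtain ⟨x, hx⟩ := TSaux.Q_mem C hsub
  have hadj : (detX (e+1) C n) • x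
      = (Xmat (e+1) C n).adjugate *ᵥ ((TSaux.aS C i - a' i) • fw n (lastFin n iF.pos)) := by
    rw [← hx, Matrix.mulVec_mulVec, Matrix.adjugate_mul, detX,
      Matrix.smul_mulVec, Matrix.one_mulVec]
  have hlF : lastFin n iF.pos = Fin.last (e+K) := by
    apply Fin.ext
    show n - 1 = e + K
    omega
  have hlv := congrFun hadj (lastFin n iF.pos)
  rw [Matrix.mulVec_smul] at hlv
  have hfw : (Xmat (e+1) C n).adjugate *ᵥ fw n (lastFin n iF.pos)
      = fun r => (Xmat (e+1) C n).adjugate r (lastFin n iF.pos) * 1 := by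
    rw [fw, Matrix.mulVec_single, MulOpposite.op_one, one_smul]
    funext r
    simp
  rw [hfw] at hlv
  simp only [Pi.smul_apply, smul_eq_mul, mul_one] at hlv
  have hdiag : (Xmat (e+1) C n).adjugate (lastFin n iF.pos) (lastFin n iF.pos)
      = detX (e+1) C (e+K) := by
    rw [hlF]
    exact TSaux.adjX C (e+K)
  rw [hdiag] at hlv
  have hdvd : detX (e+1) C n ∣ (TSaux.aS C i - a' i) * detX (e+1) C (e+K) :=
    ⟨x (lastFin n iF.pos), hlv.symm⟩
  have hcopn : IsCoprime (detX (e+1) C n) (detX (e+1) C (e+K)) := TSaux.cop_succ C hcop K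
  have hdvd2 : detX (e+1) C n ∣ (TSaux.aS C i - a' i) := hcopn.dvd_of_dvd_mul_right hdvd
  have hdvd3 : detX (e+1) C n ∣ k := by
    have : k = -(TSaux.aS C i - a' i) := by rw [hk]; ring
    rw [this]
    exact dvd_neg.mpr hdvd2
  have hle : |detX (e+1) C n| ≤ |k| := by
    have h1 : (detX (e+1) C n).natAbs ∣ k.natAbs := Int.natAbs_dvd_natAbs.mpr hdvd3
    have h2 : (detX (e+1) C n).natAbs ≤ k.natAbs :=
      Nat.le_of_dvd (Int.natAbs_pos.mpr hk0) h1
    rw [Int.abs_eq_natAbs, Int.abs_eq_natAbs]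
    exact_mod_cast h2
  linarith
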